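/- The acceptance time j_n satisfies lim_{n→∞} j_n/n = 1 + (1/p)·log((1+(b−a)·p)/(1+b·p)), and this limit lies in (0,1); in particular j_n ~ n·(1 + (1/p)·log((1+(b−a)·p)/(1+b·p))) as n → ∞. -/

import Mathlib

/-- Auxiliary sequence for the thresholds `φ^{(n)}_k`, counted backwards from time `n`:
`phiAux b p n m = φ^{(n)}_{n-m}`. -/
noncomputable def phiAux (b p : ℝ) (n : ℕ) : ℕ → ℝ
  | 0 => (1 + b * p) / n
  | m + 1 =>
      (1 / (n : ℝ) ^ 2) * max (n : ℝ) (phiAux b p n m)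
        + (p / n) * max b (phiAux b p n m)
        + (1 - p / n - 1 / (n : ℝ) ^ 2) * max 0 (phiAux b p n m)

/-- The threshold `φ^{(n)}_k`: the expected future reward of the optimal rule at time `k`
given that the value `a` has already been probed.  Defined by `φ^{(n)}_n = (1+b·p)/n` and,
for `1 ≤ k < n`,
`φ^{(n)}_k = (1/n²)·max(n, φ^{(n)}_{k+1}) + (p/n)·max(b, φ^{(n)}_{k+1})
  + (1 − p/n − 1/n²)·max(0, φ^{(n)}_{k+1})`. -/
noncomputable def phi (b p : ℝ) (n k : ℕ) : ℝ := phiAux b p n (n - k)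

/-- Auxiliary sequence for the thresholds `φ̄^{(n)}_k`, counted backwards from time `n`:
`phibarAux a b p n m = φ̄^{(n)}_{n-m}`. -/
noncomputable def phibarAux (a b p : ℝ) (n : ℕ) : ℕ → ℝ
  | 0 => a
  | m + 1 =>
      max a (phiAux b p n m) / ((m : ℝ) + 2)
        + (1 - 1 / ((m : ℝ) + 2)) *
            ((1 / (n : ℝ) ^ 2) * max (n : ℝ) (phibarAux a b p n m)
              + (p / n) * max b (phibarAux a b p n m)
              + (1 - p / n - 1 / (n : ℝ) ^ 2) * max 0 (phibarAux a b p n m))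

/-- The threshold `φ̄^{(n)}_k`: the expected future reward of the optimal rule at time `k`
given that the value `a` has not been probed yet.  Defined by `φ̄^{(n)}_n = a` and, for
`1 ≤ k < n`,
`φ̄^{(n)}_k = max(a, φ^{(n)}_{k+1})/(n+1−k) + (1 − 1/(n+1−k))·[(1/n²)·max(n, φ̄^{(n)}_{k+1})
  + (p/n)·max(b, φ̄^{(n)}_{k+1}) + (1 − p/n − 1/n²)·max(0, φ̄^{(n)}_{k+1})]`. -/
noncomputable def phibar (a b p : ℝ) (n k : ℕ) : ℝ := phibarAux a b p n (n - k)

/-- `j_n`: the earliest time `k ∈ {1,…,n}` with `a ≥ φ^{(n)}_k`. -/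
noncomputable def jn (a b p : ℝ) (n : ℕ) : ℕ :=
  sInf {k : ℕ | 1 ≤ k ∧ k ≤ n ∧ phi b p n k ≤ a}

/-- `k_n`: the earliest time `k ∈ {1,…,n}` with `b ≥ φ^{(n)}_k`. -/
noncomputable def kn (b p : ℝ) (n : ℕ) : ℕ :=
  sInf {k : ℕ | 1 ≤ k ∧ k ≤ n ∧ phi b p n k ≤ b}

/-- `k̄_n`: the earliest time `k ∈ {1,…,n}` with `b ≥ φ̄^{(n)}_k`. -/
noncomputable def kbarn (a b p : ℝ) (n : ℕ) : ℕ :=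
  sInf {k : ℕ | 1 ≤ k ∧ k ≤ n ∧ phibar a b p n k ≤ b}


section StmtThreeAux

open Filter Real

/-- The one-step survival factor `q_n = 1 - p/n - 1/n²`. -/
noncomputable def qq (p : ℝ) (n : ℕ) : ℝ := 1 - p / n - 1 / (n : ℝ) ^ 2

/-- The fixed point `C_n = (1+bp)/(p+1/n)` of the linear recursion. -/
noncomputable def CC (b p : ℝ) (n : ℕ) : ℝ := (1 + b * p) / (p + 1 / n)

/-- The crossing index `R_n = log(1 - a/C_n)/log q_n`. -/
noncomputable def RR (a b p : ℝ) (n : ℕ) : ℝ :=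
  Real.log (1 - a / CC b p n) / Real.log (qq p n)

lemma phiAux_zero' (b p : ℝ) (n : ℕ) : phiAux b p n 0 = (1 + b * p) / n := rfl

lemma phiAux_succ' (b p : ℝ) (n : ℕ) (m : ℕ) :
    phiAux b p n (m + 1) = (1 / (n : ℝ) ^ 2) * max (n : ℝ) (phiAux b p n m)
        + (p / n) * max b (phiAux b p n m)
        + qq p n * max 0 (phiAux b p n m) := rfl

lemma CC_identity (b p : ℝ) (n : ℕ) (hp : 0 < p) (hn : 0 < n) :
    CC b p n * (1 - qq p n) = (1 + b * p) / n := by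
  have hn' : (0:ℝ) < n := Nat.cast_pos.mpr hn
  have h1 : p + 1/(n:ℝ) ≠ 0 := by positivity
  unfold CC qq
  field_simp
  ring

lemma coef_sum (b p : ℝ) (n : ℕ) (hp : 0 < p) (hn : 0 < n) :
    1/(n:ℝ)^2 * n + p/n * b = CC b p n * (1 - qq p n) := by
  have hn' : (0:ℝ) < n := Nat.cast_pos.mpr hn
  rw [CC_identity b p n hp hn]
  field_simp

lemma phiAux_ge (b p : ℝ) (n : ℕ) (hp : 0 < p) (hn : 0 < n)
    (hq : 0 ≤ qq p n) (m : ℕ) :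
    CC b p n * (1 - qq p n ^ (m + 1)) ≤ phiAux b p n m := by
  have hn' : (0:ℝ) < n := Nat.cast_pos.mpr hn
  induction m with
  | zero =>
    rw [phiAux_zero', ← CC_identity b p n hp hn, pow_one]
  | succ m ih =>
    rw [phiAux_succ']
    have h1 : CC b p n * (1 - qq p n ^ (m + 1 + 1)) =
        (1/(n:ℝ)^2 * n + p/n * b) + qq p n * (CC b p n * (1 - qq p n ^ (m+1))) := by
      rw [coef_sum b p n hp hn]; ring
    rw [h1]
    have hmax3 : CC b p n * (1 - qq p n ^ (m+1)) ≤ max 0 (phiAux b p n m) :=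
      le_trans ih (le_max_right _ _)
    have c1 : (0:ℝ) ≤ 1/(n:ℝ)^2 := by positivity
    have c2 : (0:ℝ) ≤ p/(n:ℝ) := by positivity
    have t1 : 1/(n:ℝ)^2 * n ≤ 1/(n:ℝ)^2 * max (n:ℝ) (phiAux b p n m) :=
      mul_le_mul_of_nonneg_left (le_max_left _ _) c1
    have t2 : p/(n:ℝ) * b ≤ p/(n:ℝ) * max b (phiAux b p n m) :=
      mul_le_mul_of_nonneg_left (le_max_left _ _) c2
    have t3 : qq p n * (CC b p n * (1 - qq p n ^ (m+1))) ≤ qq p n * max 0 (phiAux b p n m) :=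
      mul_le_mul_of_nonneg_left hmax3 hq
    linarith

lemma phiAux_eq_formula (b p : ℝ) (n : ℕ) (hp : 0 < p) (hn : 0 < n) (hbn : b ≤ n)
    (hq : 0 ≤ qq p n) (hq1 : qq p n ≤ 1) (hC : 0 ≤ CC b p n) (m : ℕ)
    (hm : CC b p n * (1 - qq p n ^ (m + 1)) ≤ b) :
    phiAux b p n m = CC b p n * (1 - qq p n ^ (m + 1)) := by
  induction m with
  | zero => rw [phiAux_zero', ← CC_identity b p n hp hn, pow_one]
  | succ m ih =>
    have hpow : qq p n ^ (m+1+1) ≤ qq p n ^ (m+1) := by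
      calc qq p n ^ (m+1+1) = qq p n ^ (m+1) * qq p n := by ring
        _ ≤ qq p n ^ (m+1) * 1 := mul_le_mul_of_nonneg_left hq1 (pow_nonneg hq _)
        _ = qq p n ^ (m+1) := mul_one _
    have hmono : CC b p n * (1 - qq p n ^ (m+1)) ≤ CC b p n * (1 - qq p n ^ (m+1+1)) :=
      mul_le_mul_of_nonneg_left (by linarith) hC
    have hprev : phiAux b p n m = CC b p n * (1 - qq p n ^ (m+1)) := ih (le_trans hmono hm)
    have hple1 : qq p n ^ (m+1) ≤ 1 := pow_le_one₀ hq hq1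
    have h0 : 0 ≤ phiAux b p n m := by
      rw [hprev]
      have := mul_le_mul_of_nonneg_left (by linarith : (0:ℝ) ≤ 1 - qq p n ^ (m+1)) hC
      nlinarith
    have hbb : phiAux b p n m ≤ b := by rw [hprev]; exact le_trans hmono hm
    have hnn : phiAux b p n m ≤ n := le_trans hbb hbn
    rw [phiAux_succ', max_eq_left hnn, max_eq_left hbb, max_eq_right h0, hprev,
      show 1/(n:ℝ)^2 * n + p/n * b + qq p n * (CC b p n * (1 - qq p n ^ (m+1)))
        = (1/(n:ℝ)^2 * n + p/n * b) + qq p n * (CC b p n * (1 - qq p n ^ (m+1))) from by ring,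
      coef_sum b p n hp hn]
    ring

lemma phiAux_le_iff (a b p : ℝ) (n : ℕ) (ha : 0 < a) (hab : a < b) (hp : 0 < p) (hn : 0 < n)
    (hbn : b ≤ n) (hq : 0 < qq p n) (haC : a < CC b p n) (m : ℕ) :
    phiAux b p n m ≤ a ↔ (m:ℝ) + 1 ≤ RR a b p n := by
  have hb : 0 < b := lt_trans ha hab
  have hn' : (0:ℝ) < n := Nat.cast_pos.mpr hn
  have hq1 : qq p n < 1 := by
    have h1 : 0 < p/(n:ℝ) + 1/(n:ℝ)^2 := by positivity
    unfold qq; linarith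
  have hC : 0 < CC b p n := lt_trans ha haC
  have hqpow : 0 < qq p n ^ (m+1) := pow_pos hq _
  have h1 : (0:ℝ) < 1 - a / CC b p n := by
    rw [sub_pos]; exact (div_lt_one hC).mpr haC
  have hlogq : Real.log (qq p n) < 0 := Real.log_neg hq hq1
  have key : CC b p n * (1 - qq p n ^ (m+1)) ≤ a ↔ 1 - a / CC b p n ≤ qq p n ^ (m+1) := by
    rw [show (1:ℝ) - a / CC b p n = (CC b p n - a)/CC b p n from by field_simp,
      div_le_iff₀ hC]
    constructor <;> intro h <;> nlinarith
  have key2 : (1 - a / CC b p n ≤ qq p n ^ (m+1)) ↔ ((m:ℝ) + 1 ≤ RR a b p n) := by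
    rw [← Real.log_le_log_iff h1 hqpow, Real.log_pow, RR, le_div_iff_of_neg hlogq]
    push_cast
    constructor <;> intro h <;> linarith
  constructor
  · intro h
    exact key2.mp (key.mp (le_trans (phiAux_ge b p n hp hn hq.le m) h))
  · intro h
    have hBa : CC b p n * (1 - qq p n ^ (m+1)) ≤ a := key.mpr (key2.mpr h)
    rw [phiAux_eq_formula b p n hp hn hbn hq.le hq1.le hC.le m (le_trans hBa hab.le)]
    exact hBa

lemma jn_eq (a b p : ℝ) (n : ℕ) (ha : 0 < a) (hab : a < b) (hp : 0 < p) (hn : 0 < n)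
    (hbn : b ≤ n) (hq : 0 < qq p n) (haC : a < CC b p n)
    (hR1 : 1 ≤ RR a b p n) (hRn : RR a b p n ≤ n) :
    jn a b p n = ⌈(n:ℝ) + 1 - RR a b p n⌉₊ := by
  set R := RR a b p n with hR
  set K := ⌈(n:ℝ) + 1 - R⌉₊ with hKdef
  have hK1 : 1 ≤ K := Nat.one_le_ceil_iff.mpr (by linarith)
  have hKn : K ≤ n := Nat.ceil_le.mpr (by linarith)
  have hKx : (n:ℝ) + 1 - R ≤ K := Nat.le_ceil _
  have hmem : K ∈ {k : ℕ | 1 ≤ k ∧ k ≤ n ∧ phi b p n k ≤ a} := by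
    refine ⟨hK1, hKn, ?_⟩
    rw [phi, phiAux_le_iff a b p n ha hab hp hn hbn hq haC]
    rw [Nat.cast_sub hKn]
    linarith
  have hlb : ∀ k ∈ {k : ℕ | 1 ≤ k ∧ k ≤ n ∧ phi b p n k ≤ a}, K ≤ k := by
    rintro k ⟨hk1, hkn, hka⟩
    rw [phi, phiAux_le_iff a b p n ha hab hp hn hbn hq haC, Nat.cast_sub hkn] at hka
    exact Nat.ceil_le.mpr (by linarith)
  exact le_antisymm (Nat.sInf_le hmem) (le_csInf ⟨K, hmem⟩ hlb)

lemma tendsto_CC (b p : ℝ) (hp : 0 < p) :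
    Filter.Tendsto (fun n : ℕ => CC b p n) atTop (nhds ((1 + b * p)/p)) := by
  have h : Tendsto (fun n : ℕ => p + 1/(n:ℝ)) atTop (nhds p) := by
    simpa using tendsto_const_nhds.add (tendsto_one_div_atTop_nhds_zero_nat (𝕜 := ℝ))
  exact tendsto_const_nhds.div h hp.ne'

lemma tendsto_qq (p : ℝ) :
    Filter.Tendsto (fun n : ℕ => qq p n) atTop (nhds 1) := by
  have h1 : Tendsto (fun n : ℕ => p/(n:ℝ)) atTop (nhds 0) := by
    have := tendsto_one_div_atTop_nhds_zero_nat.const_mul p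
    simpa [mul_one_div, div_eq_mul_inv] using this
  have h2 : Tendsto (fun n : ℕ => 1/(n:ℝ)^2) atTop (nhds 0) := by
    have := (tendsto_one_div_atTop_nhds_zero_nat (𝕜 := ℝ)).mul tendsto_one_div_atTop_nhds_zero_nat
    simpa [one_div, ← mul_inv, ← sq] using this
  have := (tendsto_const_nhds (x := (1:ℝ)) (f := atTop)).sub h1 |>.sub h2
  simpa [qq] using this

lemma tendsto_n_log_qq (p : ℝ) (hp : 0 < p) :
    Filter.Tendsto (fun n : ℕ => (n:ℝ) * Real.log (qq p n)) atTop (nhds (-p)) := by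
  set x : ℕ → ℝ := fun n => -(p/(n:ℝ) + 1/(n:ℝ)^2) with hxdef
  have hd : HasDerivAt (fun y : ℝ => Real.log (1 + y)) 1 0 := by
    have h := (Real.hasDerivAt_log (by norm_num : (1:ℝ) + 0 ≠ 0)).comp 0
      ((hasDerivAt_id (0:ℝ)).const_add 1)
    simpa [Function.comp_def] using h
  have hslope : Tendsto (fun y : ℝ => Real.log (1+y) / y) (nhdsWithin 0 {(0:ℝ)}ᶜ) (nhds 1) := by
    have h := hasDerivAt_iff_tendsto_slope.mp hd
    refine h.congr' ?_
    filter_upwards [self_mem_nhdsWithin] with y hy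
    simp [slope_def_field, Real.log_one]
  have hx0 : Tendsto x atTop (nhdsWithin 0 {(0:ℝ)}ᶜ) := by
    rw [tendsto_nhdsWithin_iff]
    constructor
    · have h1 : Tendsto (fun n : ℕ => p/(n:ℝ)) atTop (nhds 0) := by
        have := tendsto_one_div_atTop_nhds_zero_nat.const_mul p
        simpa [mul_one_div, div_eq_mul_inv] using this
      have h2 : Tendsto (fun n : ℕ => 1/(n:ℝ)^2) atTop (nhds 0) := by
        have := (tendsto_one_div_atTop_nhds_zero_nat (𝕜 := ℝ)).mul tendsto_one_div_atTop_nhds_zero_nat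
        simpa [one_div, ← mul_inv, ← sq] using this
      have := (h1.add h2).neg
      simpa [hxdef] using this
    · filter_upwards [eventually_ge_atTop 1] with n hn
      have hn' : (0:ℝ) < n := by exact_mod_cast hn
      have : 0 < p/(n:ℝ) + 1/(n:ℝ)^2 := by positivity
      simp only [hxdef, Set.mem_compl_iff, Set.mem_singleton_iff]
      intro hcon
      rw [neg_eq_zero] at hcon
      linarith
  have hcomp : Tendsto (fun n : ℕ => Real.log (1 + x n) / x n) atTop (nhds 1) :=
    hslope.comp hx0
  have hnx : Tendsto (fun n : ℕ => (n:ℝ) * x n) atTop (nhds (-p)) := by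
    have heq : ∀ᶠ n : ℕ in atTop, -(p + 1/(n:ℝ)) = (n:ℝ) * x n := by
      filter_upwards [eventually_ge_atTop 1] with n hn
      have hn' : (0:ℝ) < n := by exact_mod_cast hn
      simp only [hxdef]
      field_simp
    refine Tendsto.congr' heq ?_
    have := (tendsto_const_nhds (x := p) (f := (atTop : Filter ℕ))).add
      tendsto_one_div_atTop_nhds_zero_nat
    simpa using this.neg
  have heq2 : ∀ᶠ n : ℕ in atTop, ((n:ℝ) * x n) * (Real.log (1 + x n) / x n)
      = (n:ℝ) * Real.log (qq p n) := by
    filter_upwards [eventually_ge_atTop 1] with n hn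
    have hn' : (0:ℝ) < n := by exact_mod_cast hn
    have hxne : x n ≠ 0 := by
      have : 0 < p/(n:ℝ) + 1/(n:ℝ)^2 := by positivity
      simp only [hxdef]; intro hcon; rw [neg_eq_zero] at hcon; linarith
    have hq : qq p n = 1 + x n := by simp only [qq, hxdef]; ring
    rw [hq]
    field_simp
  have h := hnx.mul hcomp
  rw [show (-p) * 1 = -p by ring] at h
  exact h.congr' heq2

lemma tendsto_RR_div (a b p : ℝ) (hp : 0 < p) (hbp : (0:ℝ) < 1 + b * p)
    (hr0 : 0 < (1 + (b - a) * p) / (1 + b * p)) :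
    Filter.Tendsto (fun n : ℕ => RR a b p n / n) atTop
      (nhds (Real.log ((1 + (b - a) * p) / (1 + b * p)) / (-p))) := by
  set r := (1 + (b - a) * p) / (1 + b * p) with hrdef
  have hCne : (1 + b * p)/p ≠ 0 := by positivity
  have harg : Tendsto (fun n : ℕ => 1 - a / CC b p n) atTop (nhds (1 - a/((1+b*p)/p))) :=
    tendsto_const_nhds.sub (tendsto_const_nhds.div (tendsto_CC b p hp) hCne)
  have hval : 1 - a/((1+b*p)/p) = r := by
    rw [hrdef]; field_simp; ring
  rw [hval] at harg
  have T1 : Tendsto (fun n : ℕ => Real.log (1 - a / CC b p n)) atTop (nhds (Real.log r)) :=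
    ((Real.continuousAt_log hr0.ne').tendsto.comp harg)
  have T := T1.div (tendsto_n_log_qq p hp) (by simpa using hp.ne')
  refine T.congr ?_
  intro n
  simp only [Pi.div_apply, RR]
  rw [div_div, mul_comm]

end StmtThreeAux

/-- `j_n/n → 1 + (1/p)·log((1+(b−a)·p)/(1+b·p))` as `n → ∞`, and this limit lies
in `(0,1)`; in particular `j_n ∼ n·(1 + (1/p)·log((1+(b−a)·p)/(1+b·p)))`. -/
theorem stmt_3 (a b p : ℝ)
    (ha : 0 < a) (ha1 : a < 1) (hb : 1 < b) (hp : 0 < p)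
    (hlog : Real.log (1 + p * b) < p)
    (hI : (1 + b * p) / (1 + (b - a) * p) * Real.log ((1 + b * p) / (1 + (b - a) * p)) ≤ a * p)
    (hII : (2 - p) * (b - a) < 1)
    (hIII : (1 - (2 - p) * (b - a)) / (1 + p * (b - a))
        < 1 + (1 / p) * Real.log ((1 + p * (b - a)) / (1 + p * b)))
    (hIV : 0 ≤ 2 + p * b * (1 - p * (b - a)))
    (hV : b * p * (1 + (b - a) * p) / ((1 + p * b) * Real.log (1 + p * b)) < 1)
    :
    Filter.Tendsto (fun n : ℕ => (jn a b p n : ℝ) / n) Filter.atTop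
        (nhds (1 + (1 / p) * Real.log ((1 + (b - a) * p) / (1 + b * p))))
      ∧ 0 < 1 + (1 / p) * Real.log ((1 + (b - a) * p) / (1 + b * p))
      ∧ 1 + (1 / p) * Real.log ((1 + (b - a) * p) / (1 + b * p)) < 1 := by
  classical
  have hab : a < b := lt_trans ha1 hb
  have hbp : (0:ℝ) < 1 + b * p := by nlinarith
  have hbap : (0:ℝ) < 1 + (b - a) * p := by nlinarith
  set r := (1 + (b - a) * p) / (1 + b * p) with hrdef
  have hr0 : 0 < r := div_pos hbap hbp
  have hr1 : r < 1 := by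
    rw [hrdef, div_lt_one hbp]; nlinarith
  have hlogr : Real.log r < 0 := Real.log_neg hr0 hr1
  have hinv : Real.log ((1 + b*p)/(1 + (b-a)*p)) = - Real.log r := by
    rw [hrdef, ← Real.log_inv]
    congr 1
    rw [inv_div]
  have hlogp : -p < Real.log r := by
    have h1 : Real.log ((1 + b*p)/(1 + (b-a)*p)) ≤ Real.log (1 + b*p) := by
      apply Real.log_le_log (by positivity)
      apply div_le_self hbp.le
      nlinarith
    have h2 : Real.log (1 + b*p) < p := by rw [mul_comm]; exact hlog
    rw [hinv] at h1
    linarith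
  have hLpos : 0 < 1 + (1 / p) * Real.log r := by
    have h3 : (1/p) * (-p) < (1/p) * Real.log r :=
      mul_lt_mul_of_pos_left hlogp (by positivity)
    have h4 : (1/p) * (-p) = -1 := by field_simp
    linarith
  have hLlt : 1 + (1 / p) * Real.log r < 1 := by
    have : (1/p) * Real.log r < 0 := mul_neg_of_pos_of_neg (by positivity) hlogr
    linarith
  refine ⟨?_, hLpos, hLlt⟩
  set μ := Real.log r / (-p) with hμdef
  have hμpos : 0 < μ := div_pos_of_neg_of_neg hlogr (by linarith)
  have hμ1 : μ < 1 := by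
    rw [hμdef, div_lt_iff_of_neg (by linarith : -p < 0)]
    linarith
  have hLμ : 1 + (1 / p) * Real.log r = 1 - μ := by
    rw [hμdef, div_neg, sub_neg_eq_add, one_div_mul_eq_div]
  rw [hLμ]
  have TR := tendsto_RR_div a b p hp hbp hr0
  rw [← hrdef, ← hμdef] at TR
  have E0 : ∀ᶠ n : ℕ in Filter.atTop, 0 < n := Filter.eventually_gt_atTop 0
  have E1 : ∀ᶠ n : ℕ in Filter.atTop, b ≤ (n:ℝ) :=
    tendsto_natCast_atTop_atTop.eventually_ge_atTop b
  have E2 : ∀ᶠ n : ℕ in Filter.atTop, 0 < qq p n :=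
    (tendsto_qq p).eventually (eventually_gt_nhds one_pos)
  have haLim : a < (1 + b*p)/p := by
    rw [lt_div_iff₀ hp]; nlinarith
  have E3 : ∀ᶠ n : ℕ in Filter.atTop, a < CC b p n :=
    (tendsto_CC b p hp).eventually (eventually_gt_nhds haLim)
  have E4 : ∀ᶠ n : ℕ in Filter.atTop, μ/2 < RR a b p n / n :=
    TR.eventually (eventually_gt_nhds (by linarith))
  have E5 : ∀ᶠ n : ℕ in Filter.atTop, RR a b p n / n < (μ+1)/2 :=
    TR.eventually (eventually_lt_nhds (by linarith))
  have E6 : ∀ᶠ n : ℕ in Filter.atTop, (2/μ : ℝ) ≤ (n:ℝ) :=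
    tendsto_natCast_atTop_atTop.eventually_ge_atTop _
  have Ekey : ∀ᶠ n : ℕ in Filter.atTop,
      ((n:ℝ) + 1 - RR a b p n)/n ≤ (jn a b p n : ℝ)/n ∧
      (jn a b p n : ℝ)/n ≤ ((n:ℝ) + 2 - RR a b p n)/n := by
    filter_upwards [E0, E1, E2, E3, E4, E5, E6] with n h0 h1 h2 h3 h4 h5 h6
    have hn' : (0:ℝ) < n := by exact_mod_cast h0
    have hR1 : 1 ≤ RR a b p n := by
      have hgt : μ/2 * n < RR a b p n := (lt_div_iff₀ hn').mp h4
      have h7 : (1:ℝ) ≤ μ/2 * n := by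
        have h8 := mul_le_mul_of_nonneg_left h6 (le_of_lt (half_pos hμpos))
        calc (1:ℝ) = μ/2 * (2/μ) := by field_simp
          _ ≤ μ/2 * n := h8
      linarith
    have hRn : RR a b p n ≤ (n:ℝ) := by
      have h8 : RR a b p n < (μ+1)/2 * n := (div_lt_iff₀ hn').mp h5
      have h9 : (μ+1)/2 * n ≤ 1 * n := mul_le_mul_of_nonneg_right (by linarith) hn'.le
      linarith
    have hjn := jn_eq a b p n ha hab hp h0 h1 h2 h3 hR1 hRn
    have hx0 : (0:ℝ) ≤ (n:ℝ) + 1 - RR a b p n := by linarith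
    have hceil1 : (n:ℝ) + 1 - RR a b p n ≤ (jn a b p n : ℝ) := by
      rw [hjn]; exact Nat.le_ceil _
    have hceil2 : (jn a b p n : ℝ) ≤ (n:ℝ) + 2 - RR a b p n := by
      rw [hjn]
      have := Nat.ceil_lt_add_one hx0
      linarith
    constructor
    · exact (div_le_div_iff_of_pos_right hn').mpr hceil1
    · exact (div_le_div_iff_of_pos_right hn').mpr hceil2
  have hlow : Filter.Tendsto (fun n : ℕ => ((n:ℝ)+1-RR a b p n)/n) Filter.atTop
      (nhds (1 - μ)) := by
    have heq : ∀ᶠ n : ℕ in Filter.atTop,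
        1 + 1/(n:ℝ) - RR a b p n/n = ((n:ℝ)+1-RR a b p n)/n := by
      filter_upwards [E0] with n h0
      have hn' : (0:ℝ) < n := by exact_mod_cast h0
      field_simp
    have h : Filter.Tendsto (fun n : ℕ => 1 + 1/(n:ℝ) - RR a b p n / n) Filter.atTop
        (nhds (1 + 0 - μ)) :=
      (tendsto_const_nhds.add tendsto_one_div_atTop_nhds_zero_nat).sub TR
    rw [show (1:ℝ) + 0 - μ = 1 - μ by ring] at h
    exact h.congr' heq
  have hup : Filter.Tendsto (fun n : ℕ => ((n:ℝ)+2-RR a b p n)/n) Filter.atTop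
      (nhds (1 - μ)) := by
    have heq : ∀ᶠ n : ℕ in Filter.atTop,
        1 + 2*(1/(n:ℝ)) - RR a b p n/n = ((n:ℝ)+2-RR a b p n)/n := by
      filter_upwards [E0] with n h0
      have hn' : (0:ℝ) < n := by exact_mod_cast h0
      field_simp
    have h : Filter.Tendsto (fun n : ℕ => 1 + 2*(1/(n:ℝ)) - RR a b p n / n) Filter.atTop
        (nhds (1 + 2*0 - μ)) :=
      (tendsto_const_nhds.add (tendsto_one_div_atTop_nhds_zero_nat.const_mul 2)).sub TR
    rw [show (1:ℝ) + 2*0 - μ = 1 - μ by ring] at h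
    exact h.congr' heq
  exact tendsto_of_tendsto_of_tendsto_of_le_of_le' hlow hup
    (Ekey.mono fun n h => h.1) (Ekey.mono fun n h => h.2)
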